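/- The matrix X(1, −1, 1, 1, −1, 1, −2, 1) is nilpotent; equivalently, its characteristic polynomial is t^8. -/

import Mathlib

open Polynomial

/-- The 8×8 matrix X(x₁,…,x₈) from the paper (here `x i` denotes `x_{i+1}`). -/
def Xmat (F : Type) [Field F] (x : Fin 8 → F) : Matrix (Fin 8) (Fin 8) F :=
  !![x 0, 1, 0, 0, 0, 0, 0, 0;
     x 6, x 1, 1, 0, 0, 0, 0, 0;
     0, x 2, 0, 1, 0, 0, 0, 0;
     0, 0, 0, 0, 1, 0, 0, 0;
     0, 0, 0, 0, 0, 1, 0, 0;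
     0, x 7, 0, 0, 0, 0, 1, 0;
     0, 0, 0, 0, 0, 0, 0, 1;
     x 5, 0, 0, x 4, 0, x 3, 0, 0]

/-- Integer version of the specialized matrix `X(1, −1, 1, 1, −1, 1, −2, 1)`. -/
def Nmat : Matrix (Fin 8) (Fin 8) ℤ :=
  !![1, 1, 0, 0, 0, 0, 0, 0;
     -2, -1, 1, 0, 0, 0, 0, 0;
     0, 1, 0, 1, 0, 0, 0, 0;
     0, 0, 0, 0, 1, 0, 0, 0;
     0, 0, 0, 0, 0, 1, 0, 0;
     0, 1, 0, 0, 0, 0, 1, 0;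
     0, 0, 0, 0, 0, 0, 0, 1;
     1, 0, 0, -1, 0, 1, 0, 0]

lemma Nmat_pow8 : Nmat ^ 8 = 0 := by decide

lemma XmatVal : Xmat ℂ ![1, -1, 1, 1, -1, 1, -2, 1] =
  !![1, 1, 0, 0, 0, 0, 0, 0;
     -2, -1, 1, 0, 0, 0, 0, 0;
     0, 1, 0, 1, 0, 0, 0, 0;
     0, 0, 0, 0, 1, 0, 0, 0;
     0, 0, 0, 0, 0, 1, 0, 0;
     0, 1, 0, 0, 0, 0, 1, 0;
     0, 0, 0, 0, 0, 0, 0, 1;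
     1, 0, 0, -1, 0, 1, 0, 0] := rfl

set_option maxHeartbeats 1000000 in
lemma Xmat_eq :
    Xmat ℂ ![1, -1, 1, 1, -1, 1, -2, 1] = (Int.castRingHom ℂ).mapMatrix Nmat := by
  rw [XmatVal]
  ext i j
  rw [RingHom.mapMatrix_apply, Matrix.map_apply]
  fin_cases i <;> fin_cases j <;> norm_num [Nmat, Matrix.vecHead, Matrix.vecTail]

lemma Xpow8 : (Xmat ℂ ![1, -1, 1, 1, -1, 1, -2, 1]) ^ 8 = 0 := by
  rw [Xmat_eq, ← map_pow, Nmat_pow8, map_zero]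

lemma charpoly_eq_X_pow_of_nil {n : ℕ} (M : Matrix (Fin n) (Fin n) ℂ) (hn : IsNilpotent M) :
    M.charpoly = X ^ n := by
  rw [← sub_eq_zero]
  have h := (Matrix.isNilpotent_charpoly_sub_pow_of_isNilpotent hn).eq_zero
  simpa using h

/-- The matrix X(1, −1, 1, 1, −1, 1, −2, 1) is nilpotent; equivalently, its
characteristic polynomial is t^8. -/
theorem stmt2 :
    IsNilpotent (Xmat ℂ ![1, -1, 1, 1, -1, 1, -2, 1]) ∧
    (Xmat ℂ ![1, -1, 1, 1, -1, 1, -2, 1]).charpoly = X ^ 8 := by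
  have hn : IsNilpotent (Xmat ℂ ![1, -1, 1, 1, -1, 1, -2, 1]) := ⟨8, Xpow8⟩
  refine ⟨hn, ?_⟩
  exact charpoly_eq_X_pow_of_nil _ hn
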